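/- Let A be an N×s complex matrix and B an N×t complex matrix with A*A = I_s and B*B = I_t. Put U_B = 2·B·B* − I_N and U_A = 2·A·A* − I_N, and U = U_B·U_A. Then for every complex number u with u ≠ 1 and u ≠ −1, det(I_N − u·U) = (1−u)^(N−(s+t)) · (1+u)^(s−t) · det((1+u)²·I_t − 4u·(B*·A)·(A*·B)), where the exponents N−(s+t) and s−t are integers (possibly negative). -/

import Mathlib

open Matrix

/-- Key lemma (Theorem 3.1, first equality): for isometries `A` (N×s) and `B` (N×t),
with `U = (2 B Bᴴ - I)(2 A Aᴴ - I)`, the determinant `det(I - u U)` factors as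
`(1-u)^(N-(s+t)) (1+u)^(s-t) det((1+u)² I_t - 4u Bᴴ A Aᴴ B)`. -/
theorem staggered_key_lemma_first
    (N s t : ℕ) (A : Matrix (Fin N) (Fin s) ℂ) (B : Matrix (Fin N) (Fin t) ℂ)
    (hA : Aᴴ * A = 1) (hB : Bᴴ * B = 1) (u : ℂ) (hu1 : u ≠ 1) (hu2 : u ≠ -1) :
    det ((1 : Matrix (Fin N) (Fin N) ℂ) -
        u • (((2 : ℂ) • (B * Bᴴ) - 1) * ((2 : ℂ) • (A * Aᴴ) - 1)))
      = (1 - u) ^ ((N : ℤ) - ((s : ℤ) + (t : ℤ))) * (1 + u) ^ ((s : ℤ) - (t : ℤ)) *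
        det ((1 + u) ^ 2 • (1 : Matrix (Fin t) (Fin t) ℂ) -
          (4 * u) • (Bᴴ * A * (Aᴴ * B))) := by
  classical
  have hx : (1 - u) ≠ 0 := sub_ne_zero.mpr (fun h => hu1 h.symm)
  have hy : (1 + u) ≠ 0 := fun h => hu2 (by linear_combination h)
  have hc : (u - 1) ≠ 0 := sub_ne_zero.mpr hu1
  have ha1 : ((u+1)/(u-1)) ≠ 0 := div_ne_zero (fun h => hu2 (by linear_combination h)) hc
  set UA : Matrix (Fin N) (Fin N) ℂ := (2:ℂ) • (A * Aᴴ) - 1 with hUA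
  set UB : Matrix (Fin N) (Fin N) ℂ := (2:ℂ) • (B * Bᴴ) - 1 with hUB
  set S : Matrix (Fin t) (Fin t) ℂ := Bᴴ * A * (Aᴴ * B) with hS
  set T : Matrix (Fin t) (Fin t) ℂ :=
    (1 + u) ^ 2 • (1 : Matrix (Fin t) (Fin t) ℂ) - (4 * u) • S with hT
  have hPP : (A * Aᴴ) * (A * Aᴴ) = A * Aᴴ := by
    rw [Matrix.mul_assoc, ← Matrix.mul_assoc Aᴴ, hA, Matrix.one_mul]
  have hUAUA : UA * UA = 1 := by
    rw [hUA]
    simp only [sub_mul, mul_sub, smul_mul_assoc, mul_smul_comm, smul_smul,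
      one_mul, mul_one, hPP]
    module
  -- Step 1: factor
  have key : (1 : Matrix (Fin N) (Fin N) ℂ) - u • (UB * UA) = (UA - u • UB) * UA := by
    conv_rhs => rw [sub_mul, smul_mul_assoc]
    rw [hUAUA]
  rw [key, det_mul]
  -- Step 2: det UA
  have hdetUA : det UA = (-1:ℂ)^N * (-1:ℂ)^s := by
    have h1 : UA = (-1:ℂ) • (1 + A * ((-2:ℂ) • Aᴴ)) := by
      rw [hUA, Matrix.mul_smul]; module
    have h2 : (1 : Matrix (Fin s) (Fin s) ℂ) + ((-2:ℂ) • Aᴴ) * A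
        = (-1:ℂ) • (1 : Matrix (Fin s) (Fin s) ℂ) := by
      rw [Matrix.smul_mul, hA]; module
    rw [h1, det_smul, det_one_add_mul_comm, h2, det_smul, det_one, Fintype.card_fin,
      Fintype.card_fin]
    ring
  -- Step 3: split UA - u • UB
  set C : Matrix (Fin N) (Fin s ⊕ Fin t) ℂ := fromCols A B with hC
  set D : Matrix (Fin s ⊕ Fin t) (Fin N) ℂ :=
    fromRows ((2:ℂ) • Aᴴ) ((-(2*u)) • Bᴴ) with hD
  have hsplit : UA - u • UB = (u-1) • (1 : Matrix (Fin N) (Fin N) ℂ) + C * D := by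
    rw [hC, hD, fromCols_mul_fromRows, Matrix.mul_smul, Matrix.mul_smul, hUA, hUB]
    module
  have hfac : (u-1) • (1 : Matrix (Fin N) (Fin N) ℂ) + C * D
      = (u-1) • ((1 : Matrix (Fin N) (Fin N) ℂ) + C * ((u-1)⁻¹ • D)) := by
    rw [smul_add, Matrix.mul_smul, smul_smul, mul_inv_cancel₀ hc, one_smul]
  have hdet1 : det (UA - u • UB)
      = (u-1)^N * det ((1 : Matrix (Fin s ⊕ Fin t) (Fin s ⊕ Fin t) ℂ)
          + ((u-1)⁻¹ • D) * C) := by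
    rw [hsplit, hfac, det_smul, Fintype.card_fin, det_one_add_mul_comm]
  -- Step 4: block structure
  have hblock : (1 : Matrix (Fin s ⊕ Fin t) (Fin s ⊕ Fin t) ℂ) + ((u-1)⁻¹ • D) * C
      = fromBlocks (((u+1)/(u-1)) • 1) (((2:ℂ)/(u-1)) • (Aᴴ * B))
          ((-(2*u)/(u-1)) • (Bᴴ * A)) ((-(u+1)/(u-1)) • 1) := by
    rw [hD, hC, Matrix.smul_mul, fromRows_mul_fromCols, ← fromBlocks_one,
      fromBlocks_smul, fromBlocks_add, fromBlocks_inj]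
    refine ⟨?_, ?_, ?_, ?_⟩
    · rw [Matrix.smul_mul, smul_smul, hA]
      have h0 : (1 : ℂ) + (u-1)⁻¹ * 2 = (u+1)/(u-1) := by field_simp; ring
      rw [← h0]; module
    · rw [Matrix.smul_mul, smul_smul, zero_add]
      congr 1
      field_simp
    · rw [Matrix.smul_mul, smul_smul, zero_add]
      congr 1
      field_simp
    · rw [Matrix.smul_mul, smul_smul, hB]
      have h4 : (1 : ℂ) + (u-1)⁻¹ * -(2*u) = -(u+1)/(u-1) := by field_simp; ring
      rw [← h4]; module
  -- Step 5: invertibility of top-left block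
  haveI hinv : Invertible (((u+1)/(u-1)) • (1 : Matrix (Fin s) (Fin s) ℂ)) :=
    ⟨((u+1)/(u-1))⁻¹ • (1 : Matrix (Fin s) (Fin s) ℂ), by
      rw [smul_mul_smul_comm, inv_mul_cancel₀ ha1, one_mul, one_smul], by
      rw [smul_mul_smul_comm, mul_inv_cancel₀ ha1, one_mul, one_smul]⟩
  have hinvOf : ⅟(((u+1)/(u-1)) • (1 : Matrix (Fin s) (Fin s) ℂ))
      = ((u+1)/(u-1))⁻¹ • (1 : Matrix (Fin s) (Fin s) ℂ) :=
    invOf_eq_right_inv (by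
      rw [smul_mul_smul_comm, mul_inv_cancel₀ ha1, one_mul, one_smul])
  -- Step 6: Schur complement
  have hschur : ((-(u+1)/(u-1)) • (1 : Matrix (Fin t) (Fin t) ℂ))
        - ((-(2*u)/(u-1)) • (Bᴴ * A)) * (((u+1)/(u-1))⁻¹ • (1 : Matrix (Fin s) (Fin s) ℂ))
            * (((2:ℂ)/(u-1)) • (Aᴴ * B))
      = (((1-u)*(1+u))⁻¹) • T := by
    simp only [Matrix.mul_smul, Matrix.smul_mul, Matrix.mul_one, smul_smul]
    rw [hT, hS, smul_sub, smul_smul, smul_smul]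
    congr 2
    · field_simp; ring
    · have hK : (1:ℂ) + (-u - u^2) + u^3 ≠ 0 := by
        have h9 : (1:ℂ) + (-u - u^2) + u^3 = (1-u)*((1-u)*(1+u)) := by ring
        rw [h9]; exact mul_ne_zero hx (mul_ne_zero hx hy)
      rw [inv_div]
      field_simp [hK, hy]
      linear_combination (4*u*(u-1)) * mul_inv_cancel₀ hy
  have hdet2 : det ((1 : Matrix (Fin s ⊕ Fin t) (Fin s ⊕ Fin t) ℂ) + ((u-1)⁻¹ • D) * C)
      = ((u+1)/(u-1))^s * ((((1-u)*(1+u))⁻¹)^t * det T) := by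
    rw [hblock, det_fromBlocks₁₁, hinvOf, hschur, det_smul, det_smul, det_one,
      Fintype.card_fin, Fintype.card_fin, mul_one]
  -- Step 7: assemble
  rw [hdet1, hdet2, hdetUA]
  have c1 : (u-1)^N * (-1:ℂ)^N = (1-u)^N := by rw [← mul_pow]; ring_nf
  have c2 : ((u+1)/(u-1))^s * (-1:ℂ)^s = ((1+u)/(1-u))^s := by
    rw [← mul_pow]
    congr 1
    field_simp
    ring
  have scalar : (u-1)^N * (((u+1)/(u-1))^s * ((((1-u)*(1+u))⁻¹)^t * det T))
        * ((-1:ℂ)^N * (-1:ℂ)^s)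
      = ((1-u)^N * ((1+u)/(1-u))^s * (((1-u)*(1+u))⁻¹)^t) * det T := by
    calc (u-1)^N * (((u+1)/(u-1))^s * ((((1-u)*(1+u))⁻¹)^t * det T))
        * ((-1:ℂ)^N * (-1:ℂ)^s)
        = ((u-1)^N * (-1:ℂ)^N) * (((u+1)/(u-1))^s * (-1:ℂ)^s)
          * ((((1-u)*(1+u))⁻¹)^t) * det T := by ring
      _ = _ := by rw [c1, c2]
  rw [scalar]
  congr 1
  -- final zpow identity
  rw [zpow_sub₀ hx, zpow_add₀ hx, zpow_sub₀ hy]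
  simp only [zpow_natCast]
  field_simp
  rw [div_pow, one_div, inv_pow, mul_pow]
  field_simp
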